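/- arXiv:1712.06188 — 9 statements merged into one kernel-verified Lean document; each statement's English description precedes it below -/
import Mathlib

section
/- The function f is concave on [0,1]. -/
open Real Set

theorem crushdown_f_concave
    (η : ℝ) (hη : η < 0) (w : ℝ → ℝ)
    (hw0 : w 0 = 0) (hw1 : w 1 = 1)
    (hwnn : ∀ x ∈ Icc (0:ℝ) 1, 0 ≤ w x)
    (hwC1 : ContDiffOn ℝ 1 w (Icc 0 1))
    (hwmono : MonotoneOn w (Icc 0 1))
    (f : ℝ → ℝ)
    (hf : ∀ x : ℝ, f x = if x = 0 then 0
      else Real.exp (-(∫ b in x..1, (b - η * w b)⁻¹)))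
    (hcont : ContinuousOn f (Icc 0 1)) :
    ConcaveOn ℝ (Icc 0 1) f := by
  set g : ℝ → ℝ := fun b => (b - η * w b)⁻¹ with hg
  set F : ℝ → ℝ := fun x => ∫ b in x..1, g b with hF
  -- denominator positivity
  have hd : ∀ x ∈ Ioc (0:ℝ) 1, 0 < x - η * w x := by
    intro x hx
    have h1 : η * w x ≤ 0 :=
      mul_nonpos_of_nonpos_of_nonneg hη.le (hwnn x ⟨hx.1.le, hx.2⟩)
    linarith [hx.1]
  -- continuity of g on Ioc 0 1
  have hgc : ContinuousOn g (Ioc 0 1) := by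
    apply ContinuousOn.inv₀
    · exact continuousOn_id.sub (continuousOn_const.mul
        (hwC1.continuousOn.mono Ioc_subset_Icc_self))
    · intro x hx; exact ne_of_gt (hd x hx)
  -- derivative of F on Ioo 0 1
  have hFd : ∀ x ∈ Ioo (0:ℝ) 1, HasDerivAt F (-(g x)) x := by
    intro x hx
    have hsub : uIcc x 1 ⊆ Ioc 0 1 := by
      rw [uIcc_of_le hx.2.le]; exact fun y hy => ⟨lt_of_lt_of_le hx.1 hy.1, hy.2⟩
    have hint : IntervalIntegrable g MeasureTheory.volume x 1 :=
      (hgc.mono hsub).intervalIntegrable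
    have hmeas : StronglyMeasurableAtFilter g (nhds x) :=
      ⟨Ioo 0 1, Ioo_mem_nhds hx.1 hx.2,
        ((hgc.mono Ioo_subset_Ioc_self).aestronglyMeasurable measurableSet_Ioo)⟩
    have hca : ContinuousAt g x :=
      (hgc.mono Ioo_subset_Ioc_self).continuousAt (Ioo_mem_nhds hx.1 hx.2)
    exact intervalIntegral.integral_hasDerivAt_left hint hmeas hca
  -- derivative of f on Ioo 0 1
  have hfx : ∀ x ∈ Ioo (0:ℝ) 1, HasDerivAt f (Real.exp (-F x) * g x) x := by
    intro x hx
    have h1 : HasDerivAt (fun y => Real.exp (-F y)) (Real.exp (-F x) * g x) x := by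
      have := ((hFd x hx).neg).exp
      simpa using this
    apply h1.congr_of_eventuallyEq
    filter_upwards [Ioo_mem_nhds hx.1 hx.2] with y hy
    rw [hf y, if_neg (ne_of_gt hy.1)]
  -- w differentiable on Ioo with nonneg derivative
  have hwd : ∀ x ∈ Ioo (0:ℝ) 1, HasDerivAt w (deriv w x) x := by
    intro x hx
    exact ((hwC1.contDiffAt (Icc_mem_nhds hx.1 hx.2)).differentiableAt one_ne_zero).hasDerivAt
  have hwdnn : ∀ x ∈ Ioo (0:ℝ) 1, 0 ≤ deriv w x := by
    intro x hx
    have hslope : Filter.Tendsto (slope w x) (nhdsWithin x {x}ᶜ) (nhds (deriv w x)) :=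
      hasDerivAt_iff_tendsto_slope.mp (hwd x hx)
    have hle : nhdsWithin x (Ioi x) ≤ nhdsWithin x {x}ᶜ :=
      nhdsWithin_mono x (fun y (hy : y ∈ Ioi x) => (ne_of_gt hy : y ≠ x))
    have := hslope.mono_left hle
    refine ge_of_tendsto this ?_
    filter_upwards [Ioo_mem_nhdsGT_of_mem ⟨le_refl x, hx.2⟩] with y hy
    have hxy : x < y := hy.1
    have hwle : w x ≤ w y := hwmono ⟨hx.1.le, hx.2.le⟩ ⟨(hx.1.trans hxy).le, hy.2.le⟩ hxy.le
    rw [slope_def_field]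
    exact div_nonneg (by linarith) (by linarith)
  -- h := deriv f candidate
  set h : ℝ → ℝ := fun y => Real.exp (-F y) * g y with hh
  have hhd : ∀ x ∈ Ioo (0:ℝ) 1,
      HasDerivAt h (Real.exp (-F x) * (η * deriv w x) / (x - η * w x)^2) x := by
    intro x hx
    have hdx : (x - η * w x) ≠ 0 := ne_of_gt (hd x ⟨hx.1, hx.2.le⟩)
    have hden : HasDerivAt (fun y => y - η * w y) (1 - η * deriv w x) x :=
      (hasDerivAt_id x).sub ((hwd x hx).const_mul η)
    have hgd : HasDerivAt g (-(1 - η * deriv w x) / (x - η * w x)^2) x := by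
      exact hden.inv hdx
    have hed : HasDerivAt (fun y => Real.exp (-F y)) (Real.exp (-F x) * g x) x := by
      simpa using ((hFd x hx).neg).exp
    have := hed.mul hgd
    refine this.congr_deriv ?_
    have hgval : g x = (x - η * w x)⁻¹ := rfl
    rw [hgval]
    field_simp
    ring
  have hhle : ∀ x ∈ Ioo (0:ℝ) 1,
      Real.exp (-F x) * (η * deriv w x) / (x - η * w x)^2 ≤ 0 := by
    intro x hx
    apply div_nonpos_of_nonpos_of_nonneg
    · exact mul_nonpos_of_nonneg_of_nonpos (Real.exp_nonneg _)
        (mul_nonpos_of_nonpos_of_nonneg hη.le (hwdnn x hx))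
    · positivity
  -- h is antitone on Ioo 0 1
  have hanti : AntitoneOn h (Ioo 0 1) := by
    apply antitoneOn_of_deriv_nonpos (convex_Ioo 0 1)
    · exact fun x hx => (hhd x hx).continuousAt.continuousWithinAt
    · rw [interior_Ioo]
      exact fun x hx => (hhd x hx).differentiableAt.differentiableWithinAt
    · rw [interior_Ioo]
      intro x hx
      rw [(hhd x hx).deriv]
      exact hhle x hx
  -- conclude
  apply AntitoneOn.concaveOn_of_deriv (convex_Icc 0 1) hcont
  · rw [interior_Icc]
    exact fun x hx => (hfx x hx).differentiableAt.differentiableWithinAt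
  · rw [interior_Icc]
    intro a ha b hb hab
    rw [(hfx a ha).deriv, (hfx b hb).deriv]
    exact hanti ha hb hab
end

section
/- If the derivative f'(0) (from the right) exists, then f' is continuous on [0,1], i.e., lim_{x→0⁺} f'(x) = f'(0). -/
open Real Set

theorem crushdown_f_deriv_continuous_at_zero
    (η : ℝ) (hη : η < 0) (w : ℝ → ℝ)
    (hw0 : w 0 = 0) (hw1 : w 1 = 1)
    (hwnn : ∀ x ∈ Icc (0:ℝ) 1, 0 ≤ w x)
    (hwC1 : ContDiffOn ℝ 1 w (Icc 0 1))
    (hwmono : MonotoneOn w (Icc 0 1))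
    (f : ℝ → ℝ)
    (hf : ∀ x : ℝ, f x = if x = 0 then 0
      else Real.exp (-(∫ b in x..1, (b - η * w b)⁻¹)))
    (L : ℝ) (hL : HasDerivWithinAt f L (Ici 0) 0) :
    Filter.Tendsto (fun x : ℝ => derivWithin f (Icc 0 1) x)
      (nhdsWithin 0 (Ioi 0)) (nhds L) := by
  have hf0 : f 0 = 0 := by rw [hf]; simp
  set g : ℝ → ℝ := fun b => (b - η * w b)⁻¹ with hgdef
  have hwcont : ContinuousOn w (Icc 0 1) := hwC1.continuousOn
  have hgx : ∀ x ∈ Ioo (0:ℝ) 1, ContinuousAt g x := by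
    intro x hx
    have hwx : ContinuousAt w x := hwcont.continuousAt (Icc_mem_nhds hx.1 hx.2)
    have hwnnx : 0 ≤ w x := hwnn x ⟨hx.1.le, hx.2.le⟩
    have hden : x - η * w x ≠ 0 := by nlinarith [hx.1]
    exact (continuousAt_id.sub (continuousAt_const.mul hwx)).inv₀ hden
  have hgO : ContinuousOn g (Ioo 0 1) := fun x hx => (hgx x hx).continuousWithinAt
  -- the derivative of f on (0,1)
  have hderiv : ∀ x ∈ Ioo (0:ℝ) 1, HasDerivAt f (f x * g x) x := by
    intro x hx
    have hint : IntervalIntegrable g MeasureTheory.volume x 1 := by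
      apply ContinuousOn.intervalIntegrable
      rw [uIcc_of_le hx.2.le]
      intro b hb
      have hb0 : 0 < b := lt_of_lt_of_le hx.1 hb.1
      have hwb : ContinuousWithinAt w (Icc x 1) b :=
        (hwcont.mono (Icc_subset_Icc hx.1.le le_rfl)) b hb
      have hwnnb : 0 ≤ w b := hwnn b ⟨hb0.le, hb.2⟩
      have hden : b - η * w b ≠ 0 := by nlinarith
      exact (continuousWithinAt_id.sub (continuousWithinAt_const.mul hwb)).inv₀ hden
    have hmeas := ContinuousOn.stronglyMeasurableAtFilter (μ := MeasureTheory.volume) isOpen_Ioo hgO x hx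
    have hI : HasDerivAt (fun u => ∫ b in u..1, g b) (-g x) x :=
      intervalIntegral.integral_hasDerivAt_left hint hmeas (hgx x hx)
    have hF : HasDerivAt (fun u => Real.exp (-(∫ b in u..1, g b)))
        (Real.exp (-(∫ b in x..1, g b)) * g x) x := by
      have := (Real.hasDerivAt_exp (-(∫ b in x..1, g b))).comp x hI.neg
      rw [neg_neg] at this
      exact this
    have hfeq : f =ᶠ[nhds x] fun u => Real.exp (-(∫ b in u..1, g b)) := by
      filter_upwards [eventually_ne_nhds hx.1.ne'] with u hu
      rw [hf u, if_neg hu]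
    have hfx : f x = Real.exp (-(∫ b in x..1, g b)) := by
      rw [hf x, if_neg hx.1.ne']
    rw [hfx]
    exact hF.congr_of_eventuallyEq hfeq
  -- slope of w at 0
  have hwd : HasDerivWithinAt w (derivWithin w (Icc 0 1) 0) (Icc 0 1) 0 :=
    ((hwC1.differentiableOn one_ne_zero) 0 ⟨le_rfl, by norm_num⟩).hasDerivWithinAt
  set d := derivWithin w (Icc 0 1) 0 with hd
  have hwslope : Filter.Tendsto (fun x => w x / x) (nhdsWithin 0 (Ioi 0)) (nhds d) := by
    have h1 := hasDerivWithinAt_iff_tendsto_slope.mp hwd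
    rw [Icc_diff_left, nhdsWithin_Ioc_eq_nhdsGT (by norm_num : (0:ℝ) < 1)] at h1
    refine h1.congr fun x => ?_
    simp [slope_def_field, hw0]
  have hd0 : 0 ≤ d := by
    refine ge_of_tendsto hwslope ?_
    filter_upwards [Ioc_mem_nhdsGT_of_mem (⟨le_rfl, one_pos⟩ : (0:ℝ) ∈ Ico 0 1)] with x hx
    exact div_nonneg (hwnn x ⟨hx.1.le, hx.2⟩) hx.1.le
  have hdenpos : (0:ℝ) < 1 - η * d := by nlinarith
  -- the ratio limit
  have hr : Filter.Tendsto (fun x => x * (x - η * w x)⁻¹) (nhdsWithin 0 (Ioi 0))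
      (nhds ((1 - η * d)⁻¹)) := by
    have h1 : Filter.Tendsto (fun x => (1 - η * (w x / x))⁻¹) (nhdsWithin 0 (Ioi 0))
        (nhds ((1 - η * d)⁻¹)) :=
      ((tendsto_const_nhds.sub (tendsto_const_nhds.mul hwslope)).inv₀ hdenpos.ne')
    refine h1.congr' ?_
    filter_upwards [Ioc_mem_nhdsGT_of_mem (⟨le_rfl, one_pos⟩ : (0:ℝ) ∈ Ico 0 1)] with x hx
    have hx0 : 0 < x := hx.1
    have hden : 0 < x - η * w x := by nlinarith [hwnn x ⟨hx0.le, hx.2⟩]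
    field_simp
  -- slope of f at 0
  have hfslope : Filter.Tendsto (fun x => f x / x) (nhdsWithin 0 (Ioi 0)) (nhds L) := by
    have h1 := hasDerivWithinAt_iff_tendsto_slope.mp hL
    rw [Ici_sdiff_left] at h1
    refine h1.congr fun x => ?_
    simp [slope_def_field, hf0]
  -- key limit
  have hkey : Filter.Tendsto (fun x => f x * g x) (nhdsWithin 0 (Ioi 0))
      (nhds (L * (1 - η * d)⁻¹)) := by
    refine (hfslope.mul hr).congr' ?_
    filter_upwards [self_mem_nhdsWithin] with x hx
    have hx0 : x ≠ 0 := ne_of_gt hx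
    simp only [hgdef]
    field_simp
  -- f tends to 0
  have hf0t : Filter.Tendsto f (nhdsWithin 0 (Ioi 0)) (nhds 0) := by
    have h1 : ContinuousWithinAt f (Ici 0) 0 := hL.continuousWithinAt
    have h2 := h1.tendsto
    rw [hf0] at h2
    exact h2.mono_left (nhdsWithin_mono 0 Ioi_subset_Ici_self)
  -- l'Hôpital : f x / x also tends to L * (1 - η d)⁻¹
  have hlh : Filter.Tendsto (fun x => f x / x) (nhdsWithin 0 (Ioi 0))
      (nhds (L * (1 - η * d)⁻¹)) := by
    have := HasDerivAt.lhopital_zero_right_on_Ioo (a := 0) (b := 1)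
      (f' := fun x => f x * g x) (g := fun x => x) (g' := fun _ => (1:ℝ)) one_pos
      hderiv (fun x _ => hasDerivAt_id x) (fun x _ => one_ne_zero) hf0t
      (Filter.Tendsto.mono_left Filter.tendsto_id nhdsWithin_le_nhds)
      (by simpa using hkey)
    simpa using this
  have hLeq : L = L * (1 - η * d)⁻¹ := tendsto_nhds_unique hfslope hlh
  have hfinal : Filter.Tendsto (fun x : ℝ => derivWithin f (Icc 0 1) x)
      (nhdsWithin 0 (Ioi 0)) (nhds (L * (1 - η * d)⁻¹)) := by
    refine hkey.congr' ?_
    filter_upwards [Ioo_mem_nhdsGT_of_mem (⟨le_rfl, one_pos⟩ : (0:ℝ) ∈ Ico 0 1)] with x hx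
    rw [derivWithin_of_mem_nhds (Icc_mem_nhds hx.1 hx.2), (hderiv x hx).deriv]
  rw [hLeq]
  exact hfinal
end

section
/- If f'(0) exists, then w'(0) = 0. -/
open Real Set Filter Topology

theorem crushdown_w_deriv_zero
    (η : ℝ) (hη : η < 0) (w : ℝ → ℝ)
    (hw0 : w 0 = 0) (hw1 : w 1 = 1)
    (hwnn : ∀ x ∈ Icc (0:ℝ) 1, 0 ≤ w x)
    (hwC1 : ContDiffOn ℝ 1 w (Icc 0 1))
    (hwmono : MonotoneOn w (Icc 0 1))
    (f : ℝ → ℝ)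
    (hf : ∀ x : ℝ, f x = if x = 0 then 0
      else Real.exp (-(∫ b in x..1, (b - η * w b)⁻¹)))
    (L : ℝ) (hL : HasDerivWithinAt f L (Ici 0) 0) :
    derivWithin w (Icc 0 1) 0 = 0 := by
  by_contra hcne
  set c := derivWithin w (Icc 0 1) 0 with hc
  set g : ℝ → ℝ := fun b => (b - η * w b)⁻¹ with hg
  have hwc : ContinuousOn w (Icc 0 1) := hwC1.continuousOn
  have h0m : (0:ℝ) ∈ Icc (0:ℝ) 1 := ⟨le_rfl, zero_le_one⟩
  have hwd : HasDerivWithinAt w c (Icc 0 1) 0 :=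
    (hwC1.differentiableOn one_ne_zero 0 h0m).hasDerivWithinAt
  have hslope : Tendsto (slope w 0) (𝓝[Ioc (0:ℝ) 1] 0) (𝓝 c) := by
    have := hasDerivWithinAt_iff_tendsto_slope.mp hwd
    rwa [Icc_diff_left] at this
  have hnebot : (𝓝[Ioc (0:ℝ) 1] (0:ℝ)).NeBot := left_nhdsWithin_Ioc_neBot one_pos
  -- c ≥ 0
  have hc0 : 0 ≤ c := by
    refine ge_of_tendsto hslope ?_
    filter_upwards [self_mem_nhdsWithin] with b hb
    rw [slope_def_field, hw0, sub_zero, sub_zero]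
    have hb0 : 0 < b := hb.1
    have : 0 ≤ w b := hwnn b ⟨le_of_lt hb0, hb.2⟩
    exact div_nonneg this hb0.le
  have hcpos : 0 < c := lt_of_le_of_ne hc0 (Ne.symm hcne)
  -- get δ with slope bound
  have hev : ∀ᶠ b in 𝓝[Ioc (0:ℝ) 1] 0, c / 2 < slope w 0 b :=
    hslope.eventually (eventually_gt_nhds (by linarith))
  rw [eventually_nhdsWithin_iff] at hev
  rw [Metric.eventually_nhds_iff] at hev
  obtain ⟨δ, hδpos, hδ⟩ := hev
  set d : ℝ := min (δ / 2) 1 with hd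
  have hdpos : 0 < d := lt_min (by linarith) one_pos
  have hd1 : d ≤ 1 := min_le_right _ _
  have hdδ : d < δ := lt_of_le_of_lt (min_le_left _ _) (by linarith)
  -- on (0, d], w b ≥ (c/2) b
  have hwlb : ∀ b ∈ Ioc (0:ℝ) d, c / 2 * b ≤ w b := by
    intro b hb
    have hb0 : 0 < b := hb.1
    have hbd : b ≤ d := hb.2
    have hdist : dist b (0:ℝ) < δ := by
      rw [Real.dist_eq, sub_zero, abs_of_pos hb0]; linarith
    have := hδ hdist ⟨hb0, le_trans hbd hd1⟩
    rw [slope_def_field, hw0, sub_zero, sub_zero, div_lt_div_iff₀ (by norm_num) hb0] at this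
    · nlinarith
  set m : ℝ := 1 - η * (c / 2) with hm
  have hm1 : 1 < m := by
    have h4 : 0 < -η * (c / 2) := mul_pos (neg_pos.mpr hη) (by linarith)
    rw [hm]; nlinarith
  have hmpos : 0 < m := by linarith
  -- pointwise bound on g on (0, d]
  have hgub : ∀ b ∈ Ioc (0:ℝ) d, g b ≤ m⁻¹ * b⁻¹ := by
    intro b hb
    have hb0 : 0 < b := hb.1
    have h1 : m * b ≤ b - η * w b := by
      have h3 : η * w b ≤ η * (c / 2 * b) := mul_le_mul_of_nonpos_left (hwlb b hb) hη.le
      rw [hm]; nlinarith [h3]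
    have h2 : 0 < m * b := by positivity
    calc g b ≤ (m * b)⁻¹ := by
          exact inv_anti₀ h2 h1
      _ = m⁻¹ * b⁻¹ := by rw [mul_inv]
  -- positivity of denominator on [a, 1] for a > 0
  have hden : ∀ a : ℝ, 0 < a → ∀ t ∈ Icc a 1, 0 < t - η * w t := by
    intro a ha t ht
    have htI : t ∈ Icc (0:ℝ) 1 := ⟨le_trans ha.le ht.1, ht.2⟩
    have := hwnn t htI
    nlinarith [lt_of_lt_of_le ha ht.1]
  -- integrability of g on [a, b'] ⊆ (0, 1]
  have hgint : ∀ a b' : ℝ, 0 < a → a ≤ b' → b' ≤ 1 →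
      IntervalIntegrable g MeasureTheory.volume a b' := by
    intro a b' ha hab hb1
    apply ContinuousOn.intervalIntegrable
    rw [uIcc_of_le hab]
    have hsub : Icc a b' ⊆ Icc (0:ℝ) 1 := Icc_subset_Icc ha.le hb1
    apply ContinuousOn.inv₀
    · exact (continuousOn_id.sub (continuousOn_const.mul (hwc.mono hsub)))
    · intro t ht
      have := hden a ha t ⟨ht.1, le_trans ht.2 hb1⟩
      exact ne_of_gt this
  set Cd : ℝ := ∫ b in d..1, g b with hCd
  set C : ℝ := m⁻¹ * Real.log d + Cd with hC
  -- slope of f tends to L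
  have hfslope : Tendsto (fun x => f x / x) (𝓝[Ioi (0:ℝ)] 0) (𝓝 L) := by
    have h1 := hasDerivWithinAt_iff_tendsto_slope.mp hL
    rw [Ici_sdiff_left] at h1
    have h2 : ∀ x ∈ Ioi (0:ℝ), slope f 0 x = f x / x := by
      intro x hx
      rw [slope_def_field, hf 0, if_pos rfl, sub_zero, sub_zero]
    exact h1.congr' (eventually_nhdsWithin_of_forall h2)
  -- lower bound on f x / x for x ∈ Ioo 0 d
  have hlow : ∀ x ∈ Ioo (0:ℝ) d, Real.exp ((m⁻¹ - 1) * Real.log x - C) ≤ f x / x := by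
    intro x hx
    have hx0 : 0 < x := hx.1
    have hxd : x < d := hx.2
    have hint1 : IntervalIntegrable g MeasureTheory.volume x d :=
      hgint x d hx0 hxd.le hd1
    have hint2 : IntervalIntegrable g MeasureTheory.volume d 1 :=
      hgint d 1 hdpos hd1 le_rfl
    have hsplit : (∫ b in x..d, g b) + Cd = ∫ b in x..1, g b :=
      intervalIntegral.integral_add_adjacent_intervals hint1 hint2
    have hintC : IntervalIntegrable (fun b => m⁻¹ * b⁻¹) MeasureTheory.volume x d := by
      apply ContinuousOn.intervalIntegrable
      apply continuousOn_const.mul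
      apply ContinuousOn.inv₀ continuousOn_id
      intro t ht
      rw [uIcc_of_le hxd.le] at ht
      exact ne_of_gt (lt_of_lt_of_le hx0 ht.1)
    have hmono : (∫ b in x..d, g b) ≤ ∫ b in x..d, m⁻¹ * b⁻¹ := by
      apply intervalIntegral.integral_mono_on hxd.le hint1 hintC
      intro t ht
      exact hgub t ⟨lt_of_lt_of_le hx0 ht.1, ht.2⟩
    have hcalc : (∫ b in x..d, m⁻¹ * b⁻¹) = m⁻¹ * (Real.log d - Real.log x) := by
      rw [intervalIntegral.integral_const_mul, integral_inv_of_pos hx0 hdpos,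
        Real.log_div (ne_of_gt hdpos) (ne_of_gt hx0)]
    have hIub : (∫ b in x..1, g b) ≤ m⁻¹ * (Real.log d - Real.log x) + Cd := by
      rw [← hsplit]; rw [hcalc] at hmono; linarith
    have hfx : f x = Real.exp (-(∫ b in x..1, g b)) := by
      rw [hf x, if_neg (ne_of_gt hx0)]
    have hxinv : x⁻¹ = Real.exp (-Real.log x) := by
      rw [Real.exp_neg, Real.exp_log hx0]
    rw [hfx, div_eq_mul_inv, hxinv, ← Real.exp_add]
    apply Real.exp_le_exp.mpr
    rw [hC]
    linarith
  -- the lower bound tends to atTop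
  have htop : Tendsto (fun x => Real.exp ((m⁻¹ - 1) * Real.log x - C))
      (𝓝[Ioi (0:ℝ)] 0) atTop := by
    apply Real.tendsto_exp_atTop.comp
    apply tendsto_atTop_add_const_right
    have hneg : m⁻¹ - 1 < 0 := by
      have : m⁻¹ < 1 := inv_lt_one_of_one_lt₀ hm1
      linarith
    have h1 : Tendsto (fun x => Real.log x * (m⁻¹ - 1)) (𝓝[>] (0:ℝ)) atTop :=
      Real.tendsto_log_nhdsGT_zero.atBot_mul_const_of_neg hneg
    exact h1.congr fun x => mul_comm _ _
  have hftop : Tendsto (fun x => f x / x) (𝓝[Ioi (0:ℝ)] 0) atTop := by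
    apply tendsto_atTop_mono' _ _ htop
    filter_upwards [Ioo_mem_nhdsGT_of_mem ⟨le_rfl, hdpos⟩] with x hx
    exact hlow x hx
  exact not_tendsto_atTop_of_tendsto_nhds hfslope hftop
end

section
/- If there exist ν > 1 and δ > 0 such that w(x) ≤ x^ν for all x ∈ [0,δ], then f'(0) exists (equivalently, f(x)/(x - η·w(x)) is bounded near 0; in particular for w(x) ≤ x^ν on all of [0,1] one has f(x)/(x-η·w(x)) ≤ ((1-η)/(1-η·x^{ν-1}))^{1/(ν-1)}). -/
open Real Set

theorem crushdown_f_deriv_zero_exists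
    (η : ℝ) (hη : η < 0) (w : ℝ → ℝ)
    (hw0 : w 0 = 0) (hw1 : w 1 = 1)
    (hwnn : ∀ x ∈ Icc (0:ℝ) 1, 0 ≤ w x)
    (hwC1 : ContDiffOn ℝ 1 w (Icc 0 1))
    (hwmono : MonotoneOn w (Icc 0 1))
    (f : ℝ → ℝ)
    (hf : ∀ x : ℝ, f x = if x = 0 then 0
      else Real.exp (-(∫ b in x..1, (b - η * w b)⁻¹)))
    (hbound : ∃ ν : ℝ, 1 < ν ∧ ∃ δ : ℝ, 0 < δ ∧
      ∀ x ∈ Icc (0:ℝ) δ, w x ≤ x ^ ν) :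
    ∃ L : ℝ, HasDerivWithinAt f L (Ici 0) 0 := by
  classical
  obtain ⟨ν, hν, δ, hδ, hwb⟩ := hbound
  set φ : ℝ → ℝ := fun b => (b - η * w b)⁻¹ - b⁻¹ with hφdef
  -- denominator bounds
  have hden : ∀ b ∈ Ioc (0:ℝ) 1, b ≤ b - η * w b := by
    intro b hb
    have hwnn' := hwnn b ⟨hb.1.le, hb.2⟩
    nlinarith
  have hdenpos : ∀ b ∈ Ioc (0:ℝ) 1, 0 < b - η * w b := fun b hb =>
    lt_of_lt_of_le hb.1 (hden b hb)
  -- continuity of φ on Ioc 0 1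
  have hwcont : ContinuousOn w (Icc 0 1) := hwC1.continuousOn
  have hφcont : ContinuousOn φ (Ioc 0 1) := by
    apply ContinuousOn.sub
    · apply ContinuousOn.inv₀
      · exact (continuousOn_id.sub ((continuousOn_const.mul
          (hwcont.mono Ioc_subset_Icc_self))))
      · intro b hb; exact (hdenpos b hb).ne'
    · exact continuousOn_inv₀.mono (fun b hb => ne_of_gt hb.1)
  set δ' : ℝ := min δ 1 with hδ'def
  have hδ'pos : 0 < δ' := lt_min hδ zero_lt_one
  have hδ'le1 : δ' ≤ 1 := min_le_right _ _
  have hδ'leδ : δ' ≤ δ := min_le_left _ _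
  -- integrability on Ioc 0 δ' by domination
  have hmaj : MeasureTheory.IntegrableOn (fun b => (-η) * b ^ (ν - 2)) (Ioc 0 δ') := by
    have h1 : IntervalIntegrable (fun b : ℝ => b ^ (ν - 2)) MeasureTheory.volume 0 δ' :=
      intervalIntegral.intervalIntegrable_rpow' (by linarith)
    rw [intervalIntegrable_iff_integrableOn_Ioc_of_le hδ'pos.le] at h1
    exact h1.const_mul _
  have hbnd : ∀ b ∈ Ioc (0:ℝ) δ', ‖φ b‖ ≤ (-η) * b ^ (ν - 2) := by
    intro b hb
    have hb1 : b ∈ Ioc (0:ℝ) 1 := ⟨hb.1, hb.2.trans hδ'le1⟩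
    have hbpos : 0 < b := hb.1
    have hD : 0 < b - η * w b := hdenpos b hb1
    have hDb : b ≤ b - η * w b := hden b hb1
    have hwub : w b ≤ b ^ ν := hwb b ⟨hbpos.le, hb.2.trans hδ'leδ⟩
    have hwnn' : 0 ≤ w b := hwnn b ⟨hbpos.le, hb1.2⟩
    have hφneg : φ b ≤ 0 := by
      have : (b - η * w b)⁻¹ ≤ b⁻¹ := inv_anti₀ hbpos hDb
      simp only [hφdef]
      linarith
    have h1 : ‖φ b‖ = b⁻¹ - (b - η * w b)⁻¹ := by
      rw [Real.norm_eq_abs, abs_of_nonpos hφneg]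
      simp only [hφdef]
      ring
    have h2 : b⁻¹ - (b - η * w b)⁻¹ = (-η * w b) / (b * (b - η * w b)) := by
      rw [inv_sub_inv hbpos.ne' hD.ne']
      ring_nf
    have h5 : (-η * b ^ ν) / (b * b) = (-η) * b ^ (ν - 2) := by
      rw [Real.rpow_sub hbpos, show (2:ℝ) = ((2:ℕ):ℝ) by norm_num, Real.rpow_natCast,
        pow_two]
      ring
    rw [h1, h2, ← h5]
    have hηnn : (0:ℝ) ≤ -η := by linarith
    gcongr
  -- integrability of φ on Ioc 0 1
  have hφint1 : MeasureTheory.IntegrableOn φ (Ioc 0 δ') := by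
    refine MeasureTheory.Integrable.mono' hmaj ?_ ?_
    · exact (hφcont.mono (fun b hb => ⟨hb.1, hb.2.trans hδ'le1⟩)).aestronglyMeasurable
        measurableSet_Ioc
    · exact (MeasureTheory.ae_restrict_iff' measurableSet_Ioc).mpr
        (Filter.Eventually.of_forall hbnd)
  have hφint2 : MeasureTheory.IntegrableOn φ (Ioc δ' 1) := by
    have : ContinuousOn φ (Icc δ' 1) :=
      hφcont.mono (fun b hb => ⟨lt_of_lt_of_le hδ'pos hb.1, hb.2⟩)
    exact (this.integrableOn_Icc).mono_set Ioc_subset_Icc_self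
  have hφint : MeasureTheory.IntegrableOn φ (Ioc 0 1) := by
    have := (hφint1.union hφint2)
    rwa [Ioc_union_Ioc_eq_Ioc hδ'pos.le hδ'le1] at this
  have hφintIcc : MeasureTheory.IntegrableOn φ (Icc 0 1) := by
    rwa [integrableOn_Icc_iff_integrableOn_Ioc]
  -- continuity of the primitive
  set F : ℝ → ℝ := fun x => ∫ t in x..1, φ t with hFdef
  have hFcont : ContinuousOn F (Icc 0 1) := by
    have := intervalIntegral.continuousOn_primitive_interval_left
      (μ := MeasureTheory.volume) (f := φ) (a := 0) (b := 1)
      (by rwa [uIcc_of_le zero_le_one])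
    rwa [uIcc_of_le zero_le_one] at this
  have hFtendsto : Filter.Tendsto F (nhdsWithin 0 (Ioi 0)) (nhds (F 0)) := by
    have h0 : ContinuousWithinAt F (Icc 0 1) 0 :=
      hFcont 0 ⟨le_refl 0, zero_le_one⟩
    refine h0.tendsto.mono_left ?_
    refine le_trans (nhdsWithin_le_of_mem (Ioo_mem_nhdsGT_of_mem ⟨le_refl 0, zero_lt_one⟩)) ?_
    exact nhdsWithin_mono _ Ioo_subset_Icc_self
  refine ⟨Real.exp (-(F 0)), ?_⟩
  rw [hasDerivWithinAt_iff_tendsto_slope, Ici_sdiff_left]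
  have hf0 : f 0 = 0 := by rw [hf 0, if_pos rfl]
  -- key identity on Ioo 0 1
  have hkey : ∀ x ∈ Ioo (0:ℝ) 1, slope f 0 x = Real.exp (-(F x)) := by
    intro x hx
    have hx0 : 0 < x := hx.1
    have hInv : IntervalIntegrable (fun b : ℝ => b⁻¹) MeasureTheory.volume x 1 := by
      apply ContinuousOn.intervalIntegrable
      apply continuousOn_inv₀.mono
      intro b hb
      rw [uIcc_of_le hx.2.le] at hb
      exact ne_of_gt (lt_of_lt_of_le hx0 hb.1)
    have hφI : IntervalIntegrable φ MeasureTheory.volume x 1 := by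
      rw [intervalIntegrable_iff_integrableOn_Ioc_of_le hx.2.le]
      exact hφint.mono_set (fun b hb => ⟨lt_trans hx0 hb.1, hb.2⟩)
    have hsplit : (∫ b in x..1, (b - η * w b)⁻¹)
        = (∫ b in x..1, (b:ℝ)⁻¹) + F x := by
      rw [hFdef]
      rw [← intervalIntegral.integral_add hInv hφI]
      apply intervalIntegral.integral_congr
      intro b _
      simp only [hφdef]
      ring
    have hlog : (∫ b in x..1, (b:ℝ)⁻¹) = -Real.log x := by
      rw [integral_inv_of_pos hx0 zero_lt_one, one_div, Real.log_inv]
    have hfx : f x = x * Real.exp (-(F x)) := by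
      rw [hf x, if_neg hx0.ne', hsplit, hlog, neg_add, neg_neg, Real.exp_add,
        Real.exp_log hx0]
    rw [slope_def_field, hf0, hfx, sub_zero, sub_zero]
    field_simp
  have hEq : (fun x => Real.exp (-(F x))) =ᶠ[nhdsWithin 0 (Ioi 0)] slope f 0 := by
    filter_upwards [Ioo_mem_nhdsGT_of_mem (show (0:ℝ) ∈ Ico (0:ℝ) 1 from ⟨le_refl 0, zero_lt_one⟩)]
      with x hx
    exact (hkey x hx).symm
  refine Filter.Tendsto.congr' hEq ?_
  exact (Real.continuous_exp.tendsto _).comp (hFtendsto.neg)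
end

section
/- For any continuous concave function f : [0,1] → [0,1] with f(0) = 0, f(1) = 1, right derivative f'(0) = σ/(1-η) and f'(1) = 1/(1-η), where η ≤ 0 and σ = (1-η)·f'(0) ≥ 1, one has 1/2 ≤ ∫_0^1 f(x) dx ≤ √σ/(1 + √σ). -/
open Real Set

theorem crushdown_integral_bounds
    (η σ : ℝ) (hη : η ≤ 0) (hσ : 1 ≤ σ)
    (f : ℝ → ℝ)
    (hcont : ContinuousOn f (Icc 0 1))
    (hconc : ConcaveOn ℝ (Icc 0 1) f)
    (hmaps : ∀ x ∈ Icc (0:ℝ) 1, f x ∈ Icc (0:ℝ) 1)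
    (hf0 : f 0 = 0) (hf1 : f 1 = 1)
    (hderiv0 : HasDerivWithinAt f (σ / (1 - η)) (Ici 0) 0)
    (hderiv1 : HasDerivWithinAt f (1 / (1 - η)) (Iic 1) 1) :
    1 / 2 ≤ (∫ x in (0:ℝ)..1, f x) ∧
      (∫ x in (0:ℝ)..1, f x) ≤ Real.sqrt σ / (1 + Real.sqrt σ) := by
  have ht : (0:ℝ) < 1 - η := by linarith
  set a : ℝ := σ / (1 - η) with ha
  set b : ℝ := 1 / (1 - η) with hb
  -- pointwise lower bound : x ≤ f x on [0,1]
  have hlow : ∀ x ∈ Icc (0:ℝ) 1, x ≤ f x := by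
    intro x hx
    obtain ⟨hx0, hx1⟩ := hx
    have := hconc.2 (left_mem_Icc.2 zero_le_one) (right_mem_Icc.2 zero_le_one)
      (by linarith : (0:ℝ) ≤ 1 - x) (by linarith : (0:ℝ) ≤ x) (by ring)
    simpa [hf0, hf1] using this
  -- pointwise upper bound from derivative at 0 : f x ≤ a * x
  have hub0 : ∀ x ∈ Icc (0:ℝ) 1, f x ≤ a * x := by
    intro x hx
    obtain ⟨hx0, hx1⟩ := hx
    rcases eq_or_lt_of_le hx0 with h | h
    · simp [← h, hf0]
    have htend : Filter.Tendsto (slope f 0) (nhdsWithin 0 (Ioi 0)) (nhds a) := by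
      have := hasDerivWithinAt_iff_tendsto_slope.1 hderiv0
      rwa [Set.Ici_sdiff_left] at this
    have key : f x / x ≤ a := by
      refine ge_of_tendsto htend ?_
      filter_upwards [Ioo_mem_nhdsGT_of_mem (left_mem_Ico.2 h)] with y hy
      obtain ⟨hy0, hyx⟩ := hy
      have hcomb := hconc.2 (show (0:ℝ) ∈ Icc (0:ℝ) 1 from ⟨le_refl 0, zero_le_one⟩)
        (show x ∈ Icc (0:ℝ) 1 from ⟨hx0, hx1⟩)
        (show (0:ℝ) ≤ 1 - y / x by rw [sub_nonneg]; exact (div_le_one h).2 hyx.le)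
        (show (0:ℝ) ≤ y / x by positivity)
        (show (1 - y / x) + y / x = 1 by ring)
      have hxne : x ≠ 0 := ne_of_gt h
      have hxy : (1 - y / x) • (0:ℝ) + (y / x) • x = y := by
        rw [smul_eq_mul, smul_eq_mul, mul_zero, zero_add]; field_simp
      rw [hxy] at hcomb
      have hyf : (y / x) * f x ≤ f y := by
        simpa [hf0, smul_eq_mul] using hcomb
      have hyf' : y * f x ≤ f y * x := by
        rw [div_mul_eq_mul_div, div_le_iff₀ h] at hyf
        linarith
      have hsl : slope f 0 y = f y / y := by
        simp [slope_def_field, hf0]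
      rw [hsl, div_le_div_iff₀ h hy0]
      linarith
    calc f x = (f x / x) * x := by field_simp
      _ ≤ a * x := mul_le_mul_of_nonneg_right key (le_of_lt h)
  -- pointwise upper bound from derivative at 1 : f x ≤ 1 + b * (x - 1)
  have hub1 : ∀ x ∈ Icc (0:ℝ) 1, f x ≤ 1 + b * (x - 1) := by
    intro x hx
    obtain ⟨hx0, hx1⟩ := hx
    rcases eq_or_lt_of_le hx1 with h | h
    · simp [h, hf1]
    have hx1' : (0:ℝ) < 1 - x := by linarith
    have hxne : (1:ℝ) - x ≠ 0 := ne_of_gt hx1'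
    have htend : Filter.Tendsto (slope f 1) (nhdsWithin 1 (Iio 1)) (nhds b) := by
      have := hasDerivWithinAt_iff_tendsto_slope.1 hderiv1
      rwa [Set.Iic_diff_right] at this
    have key : b ≤ (1 - f x) / (1 - x) := by
      refine le_of_tendsto htend ?_
      filter_upwards [Ioo_mem_nhdsLT_of_mem (right_mem_Ioc.2 h)] with y hy
      obtain ⟨hxy, hy1⟩ := hy
      have hy1' : (0:ℝ) < 1 - y := by linarith
      have hcomb := hconc.2 (show x ∈ Icc (0:ℝ) 1 from ⟨hx0, hx1⟩)
        (show (1:ℝ) ∈ Icc (0:ℝ) 1 from ⟨zero_le_one, le_refl 1⟩)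
        (show (0:ℝ) ≤ (1 - y) / (1 - x) from div_nonneg (by linarith) (by linarith))
        (show (0:ℝ) ≤ (y - x) / (1 - x) from div_nonneg (by linarith) (by linarith))
        (show (1 - y) / (1 - x) + (y - x) / (1 - x) = 1 by
          rw [← add_div, show (1-y)+(y-x) = 1-x by ring, div_self hxne])
      have hxy' : ((1 - y) / (1 - x)) • x + ((y - x) / (1 - x)) • (1:ℝ) = y := by
        rw [smul_eq_mul, smul_eq_mul, mul_one, div_mul_eq_mul_div, ← add_div,
          show (1-y)*x + (y-x) = y*(1-x) by ring, mul_div_assoc, div_self hxne, mul_one]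
      rw [hxy', hf1, smul_eq_mul, smul_eq_mul, mul_one] at hcomb
      have hcomb' : ((1-y)*f x + (y-x))/(1-x) ≤ f y := by
        rw [add_div]
        rw [mul_div_right_comm]
        exact hcomb
      rw [div_le_iff₀ hx1'] at hcomb'
      have hsl : slope f 1 y = (1 - f y) / (1 - y) := by
        rw [slope_def_field, hf1, div_eq_div_iff (by linarith) (by linarith)]
        ring
      rw [hsl, div_le_div_iff₀ hy1' hx1']
      nlinarith [hcomb']
    rw [hb, div_le_div_iff₀ ht hx1'] at key
    have h2 : b * (x - 1) = -((1 - x) / (1 - η)) := by rw [hb]; ring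
    have h3 : (1 - x) / (1 - η) ≤ 1 - f x := by
      rw [div_le_iff₀ ht]; linarith
    linarith [h2, h3]
  -- abbreviations
  set s : ℝ := Real.sqrt σ with hs
  have hs1 : 1 ≤ s := by
    rw [hs, show (1:ℝ) = Real.sqrt 1 from (Real.sqrt_one).symm]
    exact Real.sqrt_le_sqrt hσ
  have hs0 : 0 < s := lt_of_lt_of_le one_pos hs1
  have hssq : s ^ 2 = σ := Real.sq_sqrt (by linarith)
  set c : ℝ := 1 / (1 + s) with hc
  have hc0 : 0 < c := by positivity
  have hc1 : c ≤ 1 := by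
    rw [hc, div_le_one (by linarith)]; linarith
  -- integrability
  have hint : ∀ u v : ℝ, u ∈ Icc (0:ℝ) 1 → v ∈ Icc (0:ℝ) 1 →
      IntervalIntegrable f MeasureTheory.volume u v := by
    intro u v hu hv
    exact (hcont.mono (Set.uIcc_subset_Icc hu hv)).intervalIntegrable
  have hint01 := hint 0 1 ⟨le_refl 0, zero_le_one⟩ ⟨zero_le_one, le_refl 1⟩
  have hint0c := hint 0 c ⟨le_refl 0, zero_le_one⟩ ⟨le_of_lt hc0, hc1⟩
  have hintc1 := hint c 1 ⟨le_of_lt hc0, hc1⟩ ⟨zero_le_one, le_refl 1⟩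
  constructor
  · -- lower bound
    have : (∫ x in (0:ℝ)..1, x) ≤ ∫ x in (0:ℝ)..1, f x := by
      apply intervalIntegral.integral_mono_on zero_le_one
        ((by fun_prop : Continuous fun x : ℝ => x).intervalIntegrable _ _) hint01
      intro x hx; exact hlow x hx
    simpa [integral_id] using this
  · -- upper bound
    have hsplit : (∫ x in (0:ℝ)..1, f x) =
        (∫ x in (0:ℝ)..c, f x) + ∫ x in c..1, f x :=
      (intervalIntegral.integral_add_adjacent_intervals hint0c hintc1).symm
    have hI1 : (∫ x in (0:ℝ)..c, f x) ≤ ∫ x in (0:ℝ)..c, a * x := by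
      apply intervalIntegral.integral_mono_on (le_of_lt hc0) hint0c
        ((by fun_prop : Continuous fun x : ℝ => a * x).intervalIntegrable _ _)
      intro x hx
      exact hub0 x ⟨hx.1, le_trans hx.2 hc1⟩
    have hI2 : (∫ x in c..1, f x) ≤ ∫ x in c..1, 1 + b * (x - 1) := by
      apply intervalIntegral.integral_mono_on hc1 hintc1
        ((by fun_prop : Continuous fun x : ℝ => 1 + b * (x - 1)).intervalIntegrable _ _)
      intro x hx
      exact hub1 x ⟨le_trans (le_of_lt hc0) hx.1, hx.2⟩
    have hv1 : (∫ x in (0:ℝ)..c, a * x) = a * c ^ 2 / 2 := by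
      rw [intervalIntegral.integral_const_mul, integral_id]
      ring
    have hv2 : (∫ x in c..1, 1 + b * (x - 1)) = (1 - c) - b * (1 - c) ^ 2 / 2 := by
      have h1 : (∫ x in c..1, 1 + b * (x - 1))
          = (∫ x in c..1, (1:ℝ)) + b * ((∫ x in c..1, x) - ∫ x in c..1, (1:ℝ)) := by
        rw [intervalIntegral.integral_add
            ((by fun_prop : Continuous fun _ : ℝ => (1:ℝ)).intervalIntegrable _ _)
            ((by fun_prop : Continuous fun x : ℝ => b * (x - 1)).intervalIntegrable _ _),
          intervalIntegral.integral_const_mul,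
          intervalIntegral.integral_sub
            ((by fun_prop : Continuous fun x : ℝ => x).intervalIntegrable _ _)
            ((by fun_prop : Continuous fun _ : ℝ => (1:ℝ)).intervalIntegrable _ _)]
      rw [h1, integral_id, intervalIntegral.integral_const, smul_eq_mul]
      ring
    have hkey : a * c ^ 2 / 2 + ((1 - c) - b * (1 - c) ^ 2 / 2) = s / (1 + s) := by
      have h1c : 1 - c = s / (1 + s) := by
        rw [hc]; field_simp; ring
      rw [ha, hb, h1c, hc, ← hssq]
      have h1s : (1:ℝ) + s ≠ 0 := by positivity
      field_simp
      ring
    calc (∫ x in (0:ℝ)..1, f x)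
        = (∫ x in (0:ℝ)..c, f x) + ∫ x in c..1, f x := hsplit
      _ ≤ (∫ x in (0:ℝ)..c, a * x) + ∫ x in c..1, 1 + b * (x - 1) := add_le_add hI1 hI2
      _ = s / (1 + s) := by rw [hv1, hv2]; exact hkey
end

section
/- Under the same hypotheses, ∫_0^1 y·f̃(y) dy = (1/2)·(3·∫_0^1 f(x)² dx - 1). -/
open Real Set MeasureTheory intervalIntegral Filter Topology

theorem crushdown_q1_identity
    (η : ℝ) (hη : η < 0) (w : ℝ → ℝ)
    (hwcont : ContinuousOn w (Icc 0 1))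
    (hwnn : ∀ x ∈ Icc (0:ℝ) 1, 0 ≤ w x)
    (hw0 : w 0 = 0) (hw1 : w 1 = 1)
    (f finv : ℝ → ℝ)
    (hcont : ContinuousOn f (Icc 0 1))
    (hmono : StrictMonoOn f (Icc 0 1))
    (hf0 : f 0 = 0) (hf1 : f 1 = 1)
    (hC1 : ∀ x ∈ Ioc (0:ℝ) 1, DifferentiableWithinAt ℝ f (Icc 0 1) x)
    (hderivcont : ContinuousOn (fun x => derivWithin f (Icc 0 1) x) (Ioc 0 1))
    (hODE : ∀ x ∈ Ioc (0:ℝ) 1,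
      derivWithin f (Icc 0 1) x * (x - η * w x) = f x)
    (hinv : ∀ x ∈ Icc (0:ℝ) 1, finv (f x) = x)
    (hinv' : ∀ y ∈ Icc (0:ℝ) 1, f (finv y) = y) :
    (∫ y in (0:ℝ)..1, y * (-η * w (finv y))) =
      1 / 2 * (3 * (∫ x in (0:ℝ)..1, (f x) ^ 2) - 1) := by
  set φ : ℝ → ℝ := fun x => derivWithin f (Icc 0 1) x with hφ
  set g : ℝ → ℝ := fun y => y * (-η * w (finv y)) with hg
  -- f maps Icc 0 1 to Icc 0 1
  have hmaps : ∀ x ∈ Icc (0:ℝ) 1, f x ∈ Icc (0:ℝ) 1 := by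
    intro x hx
    constructor
    · rw [← hf0]
      exact hmono.monotoneOn (left_mem_Icc.2 zero_le_one) hx hx.1
    · rw [← hf1]
      exact hmono.monotoneOn hx (right_mem_Icc.2 zero_le_one) hx.2
  -- finv maps Icc 0 1 to Icc 0 1
  have hsurj : ∀ y ∈ Icc (0:ℝ) 1, ∃ x ∈ Icc (0:ℝ) 1, f x = y := by
    intro y hy
    have := intermediate_value_Icc (zero_le_one) hcont
    rw [hf0, hf1] at this
    obtain ⟨x, hx, hfx⟩ := this hy
    exact ⟨x, hx, hfx⟩
  have hinvmaps : ∀ y ∈ Icc (0:ℝ) 1, finv y ∈ Icc (0:ℝ) 1 := by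
    intro y hy
    obtain ⟨x, hx, hfx⟩ := hsurj y hy
    rw [← hfx, hinv x hx]; exact hx
  -- continuity of finv on Icc 0 1
  have hfinvcont : ContinuousOn finv (Icc (0:ℝ) 1) := by
    let e : Icc (0:ℝ) 1 ≃ Icc (0:ℝ) 1 :=
      { toFun := fun x => ⟨f x.1, hmaps x.1 x.2⟩
        invFun := fun y => ⟨finv y.1, hinvmaps y.1 y.2⟩
        left_inv := fun x => Subtype.ext (hinv x.1 x.2)
        right_inv := fun y => Subtype.ext (hinv' y.1 y.2) }
    have hce : Continuous e := by
      apply Continuous.subtype_mk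
      exact hcont.restrict.comp continuous_id
    have := (hce.homeoOfEquivCompactToT2 (f := e)).symm.continuous
    rw [continuousOn_iff_continuous_restrict]
    have : Continuous fun y : Icc (0:ℝ) 1 =>
        ((hce.homeoOfEquivCompactToT2 (f := e)).symm y : ℝ) :=
      continuous_subtype_val.comp this
    convert this using 1
    funext y
    rfl
  have hgcont : ContinuousOn g (Icc (0:ℝ) 1) := by
    apply ContinuousOn.mul continuousOn_id
    exact continuousOn_const.mul (hwcont.comp hfinvcont hinvmaps)
  have hgint : IntervalIntegrable g volume 0 1 := by
    apply ContinuousOn.intervalIntegrable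
    rwa [uIcc_of_le zero_le_one]
  have hf2cont : ContinuousOn (fun x => (f x) ^ 2) (Icc (0:ℝ) 1) := hcont.pow 2
  have hf2int : IntervalIntegrable (fun x => (f x) ^ 2) volume 0 1 := by
    apply ContinuousOn.intervalIntegrable
    rwa [uIcc_of_le zero_le_one]
  -- derivative at interior points
  have hfd : ∀ x ∈ Ioo (0:ℝ) 1, HasDerivAt f (φ x) x := by
    intro x hx
    have hnb : Icc (0:ℝ) 1 ∈ 𝓝 x := Icc_mem_nhds hx.1 hx.2
    exact ((hC1 x ⟨hx.1, hx.2.le⟩).hasDerivWithinAt).hasDerivAt hnb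
  -- key identity for ε ∈ Ioo 0 1
  have key : ∀ ε ∈ Ioo (0:ℝ) 1,
      (∫ y in (f ε)..1, g y)
        = 3/2 * (∫ x in ε..1, (f x) ^ 2) - 1/2 + ε * (f ε) ^ 2 / 2 := by
    intro ε hε
    have hε1 : ε ≤ 1 := hε.2.le
    have hIccsub : Icc ε 1 ⊆ Icc (0:ℝ) 1 := Icc_subset_Icc hε.1.le le_rfl
    have hIocsub : Icc ε 1 ⊆ Ioc (0:ℝ) 1 := fun x hx => ⟨hε.1.trans_le hx.1, hx.2⟩
    have huIcc : uIcc ε 1 = Icc ε 1 := uIcc_of_le hε1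
    -- substitution
    have hsub : (∫ x in ε..1, φ x • (g ∘ f) x) = ∫ y in (f ε)..(f 1), g y := by
      apply intervalIntegral.integral_comp_smul_deriv''
      · rw [huIcc]; exact hcont.mono hIccsub
      · intro x hx
        rw [min_eq_left hε1, max_eq_right hε1] at hx
        exact (hfd x ⟨hε.1.trans hx.1, hx.2⟩).hasDerivWithinAt
      · rw [huIcc]; exact hderivcont.mono hIocsub
      · rw [huIcc]
        apply hgcont.mono
        rintro y ⟨x, hx, rfl⟩
        exact hmaps x (hIccsub hx)
    rw [hf1] at hsub
    -- rewrite integrand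
    have heq : ∀ x ∈ Icc ε 1,
        φ x • (g ∘ f) x = (f x) ^ 2 - x * (f x * φ x) := by
      intro x hx
      have hx01 : x ∈ Icc (0:ℝ) 1 := hIccsub hx
      have hODEx := hODE x (hIocsub hx)
      simp only [Function.comp, hg, smul_eq_mul]
      rw [hinv x hx01]
      linarith [mul_comm (φ x) (f x), (by ring_nf :
        φ x * (f x * (-η * w x)) - ((f x)^2 - x * (f x * φ x))
          = f x * (φ x * (x - η * w x) - f x)), hODEx,
        (by rw [hODEx] : f x * (φ x * (x - η * w x) - f x) = f x * (f x - f x))]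
    have hxfφint : IntervalIntegrable (fun x => x * (f x * φ x)) volume ε 1 := by
      apply ContinuousOn.intervalIntegrable
      rw [huIcc]
      exact continuousOn_id.mul ((hcont.mono hIccsub).mul (hderivcont.mono hIocsub))
    have hf2int' : IntervalIntegrable (fun x => (f x) ^ 2) volume ε 1 := by
      apply ContinuousOn.intervalIntegrable
      rw [huIcc]; exact hf2cont.mono hIccsub
    have hsplit : (∫ x in ε..1, φ x • (g ∘ f) x)
        = (∫ x in ε..1, (f x) ^ 2) - ∫ x in ε..1, x * (f x * φ x) := by
      rw [intervalIntegral.integral_congr (g := fun x => (f x) ^ 2 - x * (f x * φ x))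
        (by rw [huIcc]; exact heq)]
      exact intervalIntegral.integral_sub hf2int' hxfφint
    -- integration by parts via FTC
    have hparts : (∫ x in ε..1, ((f x) ^ 2 / 2 + x * (f x * φ x)))
        = 1 * (f 1) ^ 2 / 2 - ε * (f ε) ^ 2 / 2 := by
      apply intervalIntegral.integral_eq_sub_of_hasDeriv_right_of_le hε1
        (f := fun x => x * (f x) ^ 2 / 2)
        (f' := fun x => (f x) ^ 2 / 2 + x * (f x * φ x))
      · exact (continuousOn_id.mul ((hcont.mono hIccsub).pow 2)).div_const 2
      · intro x hx
        have hx01 : x ∈ Ioo (0:ℝ) 1 := ⟨hε.1.trans hx.1, hx.2⟩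
        have h1 : HasDerivAt (fun x => x * (f x) ^ 2 / 2)
            ((f x) ^ 2 / 2 + x * (f x * φ x)) x := by
          have := ((hasDerivAt_id' x).fun_mul ((hfd x hx01).fun_pow 2)).div_const 2
          refine this.congr_deriv ?_
          ring
        exact h1.hasDerivWithinAt
      · exact ((hf2int'.div_const 2).add hxfφint)
    have hhalf : (∫ x in ε..1, ((f x) ^ 2 / 2 + x * (f x * φ x)))
        = (∫ x in ε..1, (f x) ^ 2) / 2 + ∫ x in ε..1, x * (f x * φ x) := by
      rw [intervalIntegral.integral_add (hf2int'.div_const 2) hxfφint,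
        intervalIntegral.integral_div]
    rw [hf1] at hparts
    rw [← hsub, hsplit]
    linarith [hparts, hhalf]
  -- now take the limit ε → 0⁺
  set l : Filter ℝ := 𝓝[>] (0:ℝ) with hl
  have hIoo_mem : Ioo (0:ℝ) 1 ∈ l := Ioo_mem_nhdsGT_of_mem ⟨le_rfl, zero_lt_one⟩
  have h0mem : (0:ℝ) ∈ Icc (0:ℝ) 1 := left_mem_Icc.2 zero_le_one
  have hfe0 : Tendsto f l (𝓝 0) := by
    have h := (hcont.continuousWithinAt h0mem)
    rw [ContinuousWithinAt, hf0] at h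
    apply h.comp
    apply tendsto_nhdsWithin_of_tendsto_nhds_of_eventually_within
    · exact tendsto_id.mono_left nhdsWithin_le_nhds
    · filter_upwards [hIoo_mem] with x hx using Ioo_subset_Icc_self hx
  -- continuity of primitives
  have hFcont : ContinuousOn (fun u => ∫ y in u..1, g y) (Icc (0:ℝ) 1) := by
    have hio : IntegrableOn g (uIcc (0:ℝ) 1) volume := by
      rw [uIcc_of_le zero_le_one]
      exact hgcont.integrableOn_compact isCompact_Icc
    have := intervalIntegral.continuousOn_primitive_interval_left
      (f := g) (μ := volume) (a := 0) (b := 1) hio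
    rwa [uIcc_of_le zero_le_one] at this
  have hGcont : ContinuousOn (fun u => ∫ x in u..1, (f x) ^ 2) (Icc (0:ℝ) 1) := by
    have := intervalIntegral.continuousOn_primitive_interval_left
      (f := fun x => (f x) ^ 2) (μ := volume) (a := 0) (b := 1)
      (by rw [uIcc_of_le zero_le_one]; exact hf2cont.integrableOn_compact isCompact_Icc : IntegrableOn (fun x => (f x)^2) (uIcc (0:ℝ) 1) volume)
    rwa [uIcc_of_le zero_le_one] at this
  -- limits
  have hlim1 : Tendsto (fun ε => ∫ y in (f ε)..1, g y) l (𝓝 (∫ y in (0:ℝ)..1, g y)) := by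
    have h := (hFcont.continuousWithinAt h0mem)
    rw [ContinuousWithinAt] at h
    apply h.comp
    rw [tendsto_nhdsWithin_iff]
    refine ⟨hfe0, ?_⟩
    filter_upwards [hIoo_mem] with x hx using hmaps x (Ioo_subset_Icc_self hx)
  have hlim2 : Tendsto (fun ε => ∫ x in ε..1, (f x) ^ 2) l
      (𝓝 (∫ x in (0:ℝ)..1, (f x) ^ 2)) := by
    have h := (hGcont.continuousWithinAt h0mem)
    rw [ContinuousWithinAt] at h
    apply h.comp
    rw [tendsto_nhdsWithin_iff]
    refine ⟨tendsto_id.mono_left nhdsWithin_le_nhds, ?_⟩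
    filter_upwards [hIoo_mem] with x hx using Ioo_subset_Icc_self hx
  have hlim3 : Tendsto (fun ε => ε * (f ε) ^ 2 / 2) l (𝓝 0) := by
    have : Tendsto (fun ε => ε * (f ε) ^ 2 / 2) l (𝓝 (0 * 0 ^ 2 / 2)) :=
      ((tendsto_id.mono_left nhdsWithin_le_nhds).mul (hfe0.pow 2)).div_const 2
    simpa using this
  have hlimR : Tendsto (fun ε => 3/2 * (∫ x in ε..1, (f x) ^ 2) - 1/2 + ε * (f ε) ^ 2 / 2) l
      (𝓝 (3/2 * (∫ x in (0:ℝ)..1, (f x) ^ 2) - 1/2 + 0)) :=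
    ((hlim2.const_mul (3/2)).sub_const (1/2)).add hlim3
  have heqlim : (∫ y in (0:ℝ)..1, g y)
      = 3/2 * (∫ x in (0:ℝ)..1, (f x) ^ 2) - 1/2 + 0 := by
    apply tendsto_nhds_unique (l := l) _ hlimR
    apply hlim1.congr'
    filter_upwards [hIoo_mem] with ε hε
    exact key ε hε
  have : (∫ y in (0:ℝ)..1, g y) = ∫ y in (0:ℝ)..1, y * (-η * w (finv y)) := rfl
  rw [← this, heqlim]
  ring
end

section
/- Let g : [0,1] → ℝ be a nonnegative, convex, continuous function with g(0) = 0 and g(1) = 1. Then ∫_0^1 g(y) dy ≤ (3/2)·∫_0^1 y·g(y) dy. -/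
open Real Set MeasureTheory intervalIntegral

theorem crushdown_gamma_bound
    (g : ℝ → ℝ)
    (hgnn : ∀ y ∈ Icc (0:ℝ) 1, 0 ≤ g y)
    (hconv : ConvexOn ℝ (Icc 0 1) g)
    (hcont : ContinuousOn g (Icc 0 1))
    (hg0 : g 0 = 0) (hg1 : g 1 = 1) :
    (∫ y in (0:ℝ)..1, g y) ≤ 3 / 2 * ∫ y in (0:ℝ)..1, y * g y := by
  have hIg : IntervalIntegrable g volume 0 1 := by
    apply ContinuousOn.intervalIntegrable
    rwa [uIcc_of_le (by norm_num : (0:ℝ) ≤ 1)]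
  have hIyg : IntervalIntegrable (fun y => y * g y) volume 0 1 := by
    apply ContinuousOn.intervalIntegrable
    rw [uIcc_of_le (by norm_num : (0:ℝ) ≤ 1)]
    exact continuousOn_id.mul hcont
  set A := ∫ y in (0:ℝ)..1, g y with hA
  set B := ∫ y in (0:ℝ)..1, y * g y with hB
  -- convexity: x * g y ≤ y * g x for 0 ≤ y ≤ x ≤ 1
  have mono : ∀ y x : ℝ, 0 ≤ y → y ≤ x → x ≤ 1 → x * g y ≤ y * g x := by
    intro y x hy hyx hx1
    rcases eq_or_lt_of_le (hy.trans hyx) with h | hxpos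
    · have hx0 : x = 0 := h.symm
      have hy0 : y = 0 := le_antisymm (hx0 ▸ hyx) hy
      simp [hx0, hy0]
    · have hxmem : x ∈ Icc (0:ℝ) 1 := ⟨le_of_lt hxpos, hx1⟩
      have h0mem : (0:ℝ) ∈ Icc (0:ℝ) 1 := ⟨le_refl _, by norm_num⟩
      have ha : (0:ℝ) ≤ 1 - y / x := by
        have : y / x ≤ 1 := div_le_one_of_le₀ hyx (le_of_lt hxpos)
        linarith
      have hb : (0:ℝ) ≤ y / x := div_nonneg hy (le_of_lt hxpos)
      have hab : (1 - y / x) + y / x = 1 := by ring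
      have h := hconv.2 h0mem hxmem ha hb hab
      simp only [smul_eq_mul, mul_zero, hg0, zero_add] at h
      have hyy : y / x * x = y := div_mul_cancel₀ y (ne_of_gt hxpos)
      rw [hyy] at h
      calc x * g y ≤ x * (y / x * g x) :=
            mul_le_mul_of_nonneg_left h (le_of_lt hxpos)
        _ = y * g x := by field_simp
  -- pointwise kernel nonnegativity
  have key : ∀ x ∈ Icc (0:ℝ) 1, ∀ y, y ∈ Icc (0:ℝ) 1 →
      0 ≤ (x - y) * (y * g x - x * g y) := by
    intro x hx y hy
    rcases le_total y x with h | h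
    · exact mul_nonneg (by linarith) (by linarith [mono y x hy.1 h hx.2])
    · have h1 : x - y ≤ 0 := by linarith
      have h2 : y * g x - x * g y ≤ 0 := by linarith [mono x y hx.1 h hy.2]
      have := mul_nonneg (neg_nonneg.2 h1) (neg_nonneg.2 h2)
      linarith [neg_mul_neg (x - y) (y * g x - x * g y), this]
  -- inner integral computation
  have inner_eq : ∀ x : ℝ, (∫ y in (0:ℝ)..1, (x - y) * (y * g x - x * g y))
      = g x * (x / 2 - 1 / 3) - x ^ 2 * A + x * B := by
    intro x
    have e : ∀ y : ℝ, (x - y) * (y * g x - x * g y)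
        = ((x * g x) * y - g x * y ^ 2) + (-(x ^ 2) * g y + x * (y * g y)) := by
      intro y; ring
    have i1 : IntervalIntegrable (fun y : ℝ => (x * g x) * y - g x * y ^ 2) volume 0 1 := by
      apply Continuous.intervalIntegrable; fun_prop
    have i2 : IntervalIntegrable (fun y : ℝ => -(x ^ 2) * g y) volume 0 1 := hIg.const_mul _
    have i3 : IntervalIntegrable (fun y : ℝ => x * (y * g y)) volume 0 1 := hIyg.const_mul _
    calc (∫ y in (0:ℝ)..1, (x - y) * (y * g x - x * g y))
        = ∫ y in (0:ℝ)..1, (((x * g x) * y - g x * y ^ 2) + (-(x ^ 2) * g y + x * (y * g y))) := by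
          simp_rw [e]
      _ = (∫ y in (0:ℝ)..1, ((x * g x) * y - g x * y ^ 2))
          + ∫ y in (0:ℝ)..1, (-(x ^ 2) * g y + x * (y * g y)) :=
          intervalIntegral.integral_add i1 (i2.add i3)
      _ = ((∫ y in (0:ℝ)..1, (x * g x) * y) - ∫ y in (0:ℝ)..1, g x * y ^ 2)
          + ((∫ y in (0:ℝ)..1, -(x ^ 2) * g y) + ∫ y in (0:ℝ)..1, x * (y * g y)) := by
          rw [intervalIntegral.integral_sub (by apply Continuous.intervalIntegrable (u := fun y : ℝ => (x * g x) * y); fun_prop)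
              (by apply Continuous.intervalIntegrable (u := fun y : ℝ => g x * y ^ 2); fun_prop),
            intervalIntegral.integral_add i2 i3]
      _ = ((x * g x) * (1/2) - g x * (1/3)) + (-(x ^ 2) * A + x * B) := by
          rw [intervalIntegral.integral_const_mul, intervalIntegral.integral_const_mul,
            intervalIntegral.integral_const_mul, intervalIntegral.integral_const_mul]
          norm_num
          rw [hA, hB]
      _ = g x * (x / 2 - 1 / 3) - x ^ 2 * A + x * B := by ring
  -- F is nonneg on [0,1]
  have hF : ∀ x ∈ Icc (0:ℝ) 1, 0 ≤ g x * (x / 2 - 1 / 3) - x ^ 2 * A + x * B := by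
    intro x hx
    rw [← inner_eq x]
    exact intervalIntegral.integral_nonneg (by norm_num) (key x hx)
  -- outer integral
  have houter : 0 ≤ ∫ x in (0:ℝ)..1, (g x * (x / 2 - 1 / 3) - x ^ 2 * A + x * B) :=
    intervalIntegral.integral_nonneg (by norm_num) hF
  have outer_eq : (∫ x in (0:ℝ)..1, (g x * (x / 2 - 1 / 3) - x ^ 2 * A + x * B))
      = B - 2 / 3 * A := by
    have e : ∀ x : ℝ, g x * (x / 2 - 1 / 3) - x ^ 2 * A + x * B
        = ((1/2) * (x * g x) - (1/3) * g x) + (-(A) * x ^ 2 + B * x) := by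
      intro x; ring
    have i1 : IntervalIntegrable (fun x : ℝ => (1/2) * (x * g x)) volume 0 1 := hIyg.const_mul _
    have i2 : IntervalIntegrable (fun x : ℝ => (1/3) * g x) volume 0 1 := hIg.const_mul _
    have i3 : IntervalIntegrable (fun x : ℝ => -(A) * x ^ 2 + B * x) volume 0 1 := by
      apply Continuous.intervalIntegrable; fun_prop
    calc (∫ x in (0:ℝ)..1, (g x * (x / 2 - 1 / 3) - x ^ 2 * A + x * B))
        = ∫ x in (0:ℝ)..1, (((1/2) * (x * g x) - (1/3) * g x) + (-(A) * x ^ 2 + B * x)) := by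
          simp_rw [e]
      _ = ((∫ x in (0:ℝ)..1, (1/2) * (x * g x)) - ∫ x in (0:ℝ)..1, (1/3) * g x)
          + ∫ x in (0:ℝ)..1, (-(A) * x ^ 2 + B * x) := by
          rw [intervalIntegral.integral_add (i1.sub i2) i3,
            intervalIntegral.integral_sub i1 i2]
      _ = ((1/2) * B - (1/3) * A) + (-(A) * (1/3) + B * (1/2)) := by
          rw [intervalIntegral.integral_const_mul, intervalIntegral.integral_const_mul]
          rw [intervalIntegral.integral_add (by apply Continuous.intervalIntegrable (u := fun x : ℝ => -(A) * x ^ 2); fun_prop)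
              (by apply Continuous.intervalIntegrable (u := fun x : ℝ => B * x); fun_prop),
            intervalIntegral.integral_const_mul, intervalIntegral.integral_const_mul]
          norm_num
          rw [hA, hB]
      _ = B - 2 / 3 * A := by ring
  rw [outer_eq] at houter
  linarith
end

section
/- Let g : [0,1] → ℝ be nonnegative, convex, continuous with g(0) = 0, and fix z₀ < z₁. The function g_#(z) := ∫_{(z₁-z₀)/(z-z₀)}^1 g(y) dy, defined for z ≥ z₁ (and 0 for z < z₁), is nonnegative, monotonically increasing, continuous, concave on [z₁, ∞), has right derivative g_#'(z₁) = g(1)/(z₁ - z₀), and g_#(z) → ∫_0^1 g(y) dy as z → ∞. -/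
open Real Set MeasureTheory

theorem crushdown_gsharp_properties
    (g : ℝ → ℝ)
    (hgnn : ∀ y ∈ Icc (0:ℝ) 1, 0 ≤ g y)
    (hconv : ConvexOn ℝ (Icc 0 1) g)
    (hcont : ContinuousOn g (Icc 0 1))
    (hg0 : g 0 = 0)
    (z₀ z₁ : ℝ) (hz : z₀ < z₁)
    (gsh : ℝ → ℝ)
    (hgsh : ∀ z : ℝ, gsh z =
      if z < z₁ then 0 else ∫ y in ((z₁ - z₀) / (z - z₀))..1, g y) :
    (∀ z : ℝ, 0 ≤ gsh z) ∧
    Monotone gsh ∧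
    Continuous gsh ∧
    ConcaveOn ℝ (Ici z₁) gsh ∧
    HasDerivWithinAt gsh (g 1 / (z₁ - z₀)) (Ici z₁) z₁ ∧
    Filter.Tendsto gsh Filter.atTop (nhds (∫ y in (0:ℝ)..1, g y)) := by
  have hΔ : (0:ℝ) < z₁ - z₀ := sub_pos.mpr hz
  set Δ : ℝ := z₁ - z₀ with hΔdef
  -- integrability of g on [0,1]
  have hintIcc : IntegrableOn g (Icc 0 1) := hcont.integrableOn_compact isCompact_Icc
  have hii : ∀ a ∈ Icc (0:ℝ) 1, ∀ b ∈ Icc (0:ℝ) 1, IntervalIntegrable g volume a b := by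
    intro a ha b hb
    exact (hintIcc.mono_set (uIcc_subset_Icc ha hb)).intervalIntegrable
  set G : ℝ → ℝ := fun t => ∫ y in t..1, g y with hGdef
  set ψ : ℝ → ℝ := fun z => Δ / (max z z₁ - z₀) with hψdef
  have hden : ∀ z, Δ ≤ max z z₁ - z₀ := fun z => sub_le_sub_right (le_max_right _ _) _
  have hdenpos : ∀ z, 0 < max z z₁ - z₀ := fun z => lt_of_lt_of_le hΔ (hden z)
  have hψpos : ∀ z, 0 < ψ z := fun z => div_pos hΔ (hdenpos z)
  have hψle : ∀ z, ψ z ≤ 1 := fun z => (div_le_one (hdenpos z)).mpr (hden z)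
  have hψmem : ∀ z, ψ z ∈ Icc (0:ℝ) 1 := fun z => ⟨(hψpos z).le, hψle z⟩
  have hG1 : G 1 = 0 := intervalIntegral.integral_same
  have hgsheq : gsh = fun z => G (ψ z) := by
    funext z
    rw [hgsh]
    by_cases h : z < z₁
    · have hm : max z z₁ = z₁ := max_eq_right h.le
      simp only [hψdef, hGdef, hm, if_pos h, ← hΔdef, div_self hΔ.ne']
      exact hG1.symm
    · have hm : max z z₁ = z := max_eq_left (not_lt.mp h)
      simp only [hψdef, hGdef, hm, if_neg h, ← hΔdef]
  -- G is antitone on [0,1]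
  have hGanti : ∀ s ∈ Icc (0:ℝ) 1, ∀ t ∈ Icc (0:ℝ) 1, s ≤ t → G t ≤ G s := by
    intro s hs t ht hst
    have hadd : (∫ y in s..t, g y) + ∫ y in t..1, g y = ∫ y in s..1, g y :=
      intervalIntegral.integral_add_adjacent_intervals (hii s hs t ht)
        (hii t ht 1 ⟨zero_le_one, le_rfl⟩)
    have hnn : 0 ≤ ∫ y in s..t, g y :=
      intervalIntegral.integral_nonneg hst
        (fun y hy => hgnn y ⟨hs.1.trans hy.1, hy.2.trans ht.2⟩)
    simp only [hGdef]
    linarith [hadd]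
  have hGnn : ∀ t ∈ Icc (0:ℝ) 1, 0 ≤ G t := by
    intro t ht
    have := hGanti t ht 1 ⟨zero_le_one, le_rfl⟩ ht.2
    rw [hG1] at this; exact this
  -- continuity of G on [0,1]
  have hGcont : ContinuousOn G (Icc 0 1) := by
    have h1 : ContinuousOn (fun t => ∫ y in (0:ℝ)..t, g y) (Icc 0 1) := by
      have := intervalIntegral.continuousOn_primitive_interval
        (f := g) (a := (0:ℝ)) (b := 1) (μ := volume)
        (by simpa [uIcc_of_le (zero_le_one : (0:ℝ) ≤ 1)] using hintIcc)
      simpa [uIcc_of_le (zero_le_one : (0:ℝ) ≤ 1)] using this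
    have h2 : ContinuousOn (fun t => (∫ y in (0:ℝ)..1, g y) - ∫ y in (0:ℝ)..t, g y)
        (Icc 0 1) := continuousOn_const.sub h1
    refine h2.congr ?_
    intro t ht
    have hadd : (∫ y in (0:ℝ)..t, g y) + ∫ y in t..1, g y = ∫ y in (0:ℝ)..1, g y :=
      intervalIntegral.integral_add_adjacent_intervals
        (hii 0 ⟨le_rfl, zero_le_one⟩ t ht) (hii t ht 1 ⟨zero_le_one, le_rfl⟩)
    simp only [hGdef]
    linarith [hadd]
  -- ψ properties
  have hψcont : Continuous ψ := by
    apply continuous_const.div ((continuous_id.max continuous_const).sub continuous_const)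
    exact fun z => (hdenpos z).ne'
  have hψanti : Antitone ψ := by
    intro a b hab
    exact div_le_div_of_nonneg_left hΔ.le (hdenpos a)
      (sub_le_sub_right (max_le_max hab le_rfl) _)
  rw [hgsheq]
  -- key convexity inequality
  have key : ∀ s t : ℝ, 0 < s → s ≤ t → t ≤ 1 → g s * s^2 ≤ g t * t^2 := by
    intro s t hs hst ht1
    have hts : 0 < t := hs.trans_le hst
    have hgt : 0 ≤ g t := hgnn t ⟨hts.le, ht1⟩
    have hgs : g s ≤ (s/t) * g t := by
      have h2 : g ((1 - s/t) * 0 + (s/t) * t) ≤ (1 - s/t) * g 0 + (s/t) * g t :=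
        hconv.2 ⟨le_rfl, zero_le_one⟩ ⟨hts.le, ht1⟩
          (by rw [sub_nonneg]; exact (div_le_one hts).mpr hst)
          (by positivity) (by ring)
      have hst' : (1 - s/t) * (0:ℝ) + (s/t) * t = s := by field_simp; ring
      rw [hst', hg0] at h2
      simpa using h2
    have hgs' : g s * t ≤ s * g t := by
      have h3 := mul_le_mul_of_nonneg_right hgs hts.le
      calc g s * t ≤ (s/t) * g t * t := h3
        _ = s * g t := by field_simp
    nlinarith [mul_le_mul_of_nonneg_right hgs' (sq_nonneg s),
      mul_le_mul_of_nonneg_left (pow_le_pow_left₀ hs.le hst 3) hgt, hts, hs]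
  -- derivative on the interior
  have hderiv : ∀ z, z₁ < z →
      HasDerivAt (fun w => G (ψ w)) (g (Δ/(z-z₀)) * (Δ/(z-z₀)^2)) z := by
    intro z hz1
    have hz0 : z₀ < z := hz.trans hz1
    have hzz : (0:ℝ) < z - z₀ := sub_pos.mpr hz0
    have ht0 : 0 < Δ/(z-z₀) := div_pos hΔ hzz
    have ht1 : Δ/(z-z₀) < 1 := (div_lt_one hzz).mpr (by simp only [hΔdef]; linarith)
    have hgcA : ContinuousAt g (Δ/(z-z₀)) := hcont.continuousAt (Icc_mem_nhds ht0 ht1)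
    have hG' : HasDerivAt G (-g (Δ/(z-z₀))) (Δ/(z-z₀)) := by
      apply intervalIntegral.integral_hasDerivAt_left
        (hii _ ⟨ht0.le, ht1.le⟩ 1 ⟨zero_le_one, le_rfl⟩) ?_ hgcA
      exact ⟨Icc 0 1, Icc_mem_nhds ht0 ht1, hcont.aestronglyMeasurable measurableSet_Icc⟩
    have hh' : HasDerivAt (fun w => Δ/(w - z₀))
        ((0 * (z - z₀) - Δ * 1)/(z-z₀)^2) z :=
      (hasDerivAt_const z Δ).div ((hasDerivAt_id z).sub_const z₀) hzz.ne'
    have hcomp : HasDerivAt (fun w => G (Δ/(w - z₀)))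
        (-g (Δ/(z-z₀)) * ((0 * (z - z₀) - Δ * 1)/(z-z₀)^2)) z :=
      by have := HasDerivAt.comp z hG' hh'; exact this
    have heq : (fun w => G (ψ w)) =ᶠ[nhds z] (fun w => G (Δ/(w - z₀))) := by
      filter_upwards [eventually_gt_nhds hz1] with w hw
      simp only [hψdef, max_eq_left hw.le]
    refine (hcomp.congr_of_eventuallyEq heq).congr_deriv ?_
    ring
  -- continuity of gsh
  have hcontgsh : Continuous (fun z => G (ψ z)) :=
    hGcont.comp_continuous hψcont hψmem
  refine ⟨?_, ?_, hcontgsh, ?_, ?_, ?_⟩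
  · intro z
    exact hGnn _ (hψmem z)
  · intro a b hab
    exact hGanti _ (hψmem b) _ (hψmem a) (hψanti hab)
  · -- concavity
    apply AntitoneOn.concaveOn_of_deriv (convex_Ici z₁) hcontgsh.continuousOn
    · rw [interior_Ici]
      exact fun z hzz => ((hderiv z hzz).differentiableAt).differentiableWithinAt
    · rw [interior_Ici]
      intro a ha b hb hab
      rw [(hderiv a ha).deriv, (hderiv b hb).deriv]
      have ha0 : (0:ℝ) < a - z₀ := sub_pos.mpr (hz.trans ha)
      have hb0 : (0:ℝ) < b - z₀ := sub_pos.mpr (hz.trans hb)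
      have hs0 : 0 < Δ/(b-z₀) := div_pos hΔ hb0
      have hst : Δ/(b-z₀) ≤ Δ/(a-z₀) :=
        div_le_div_of_nonneg_left hΔ.le ha0 (by linarith)
      have ht1 : Δ/(a-z₀) ≤ 1 := (div_le_one ha0).mpr (by simp only [hΔdef]; linarith [(mem_Ioi.mp ha).le])
      have hk := key _ _ hs0 hst ht1
      have e1 : Δ/(b-z₀)^2 = (Δ/(b-z₀))^2/Δ := by
        rw [div_pow, div_div]
        rw [eq_div_iff (by positivity)]
        field_simp
      have e2 : Δ/(a-z₀)^2 = (Δ/(a-z₀))^2/Δ := by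
        rw [div_pow, div_div]
        rw [eq_div_iff (by positivity)]
        field_simp
      rw [e1, e2, mul_div_assoc', mul_div_assoc']
      exact div_le_div_of_nonneg_right hk hΔ.le
  · -- derivative at z₁ within Ici z₁
    have hG' : HasDerivWithinAt G (-g 1) (Iic 1) 1 := by
      apply intervalIntegral.integral_hasDerivWithinAt_left
        (hii 1 ⟨zero_le_one, le_rfl⟩ 1 ⟨zero_le_one, le_rfl⟩)
        (t := Iic 1) ?_ ?_
      · refine ⟨Icc 0 1, ?_, hcont.aestronglyMeasurable measurableSet_Icc⟩
        rw [← nhdsWithin_Icc_eq_nhdsLE (zero_lt_one)]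
        exact self_mem_nhdsWithin
      · have := (hcont 1 ⟨zero_le_one, le_rfl⟩)
        rwa [ContinuousWithinAt, nhdsWithin_Icc_eq_nhdsLE (zero_lt_one)] at this
    have hh' : HasDerivWithinAt (fun w => Δ/(w - z₀))
        ((0 * (z₁ - z₀) - Δ * 1)/(z₁-z₀)^2) (Ici z₁) z₁ :=
      (((hasDerivAt_const z₁ Δ).div ((hasDerivAt_id z₁).sub_const z₀)
        hΔ.ne')).hasDerivWithinAt
    have hmap : MapsTo (fun w => Δ/(w - z₀)) (Ici z₁) (Iic 1) := by
      intro w hw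
      have hw0 : (0:ℝ) < w - z₀ := by simp only [mem_Ici] at hw; linarith
      exact (div_le_one hw0).mpr (by simp only [mem_Ici] at hw; simp only [hΔdef]; linarith)
    have h1 : (Δ/(z₁ - z₀)) = (1:ℝ) := div_self hΔ.ne'
    have hcomp : HasDerivWithinAt (fun w => G (Δ/(w - z₀)))
        (-g 1 * ((0 * (z₁ - z₀) - Δ * 1)/(z₁-z₀)^2)) (Ici z₁) z₁ := by
      have hG'' : HasDerivWithinAt G (-g 1) (Iic 1) (Δ/(z₁-z₀)) := by
        rw [h1]; exact hG'
      exact HasDerivWithinAt.comp z₁ hG'' hh' hmap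
    have hcongr : HasDerivWithinAt (fun z => G (ψ z))
        (-g 1 * ((0 * (z₁ - z₀) - Δ * 1)/(z₁-z₀)^2)) (Ici z₁) z₁ := by
      apply hcomp.congr ?_ ?_
      · intro w hw
        simp only [hψdef, max_eq_left (mem_Ici.mp hw)]
      · simp only [hψdef, max_self]
    refine hcongr.congr_deriv ?_
    rw [← hΔdef]
    field_simp
    ring
  · -- limit at infinity
    have hψ0 : Filter.Tendsto ψ Filter.atTop (nhds 0) := by
      apply Filter.Tendsto.div_atTop tendsto_const_nhds
      apply Filter.tendsto_atTop_mono (fun z => sub_le_sub_right (le_max_left z z₁) z₀)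
      exact Filter.tendsto_atTop_add_const_right _ _ Filter.tendsto_id
    have hG0 : ContinuousWithinAt G (Icc 0 1) 0 := hGcont 0 ⟨le_rfl, zero_le_one⟩
    have : Filter.Tendsto (fun z => G (ψ z)) Filter.atTop (nhds (G 0)) := by
      apply hG0.tendsto.comp
      rw [tendsto_nhdsWithin_iff]
      exact ⟨hψ0, Filter.Eventually.of_forall (fun z => hψmem z)⟩
    simpa [hGdef] using this
end

section
/- With g_# as above and g convex nonnegative with g(0)=0, g(1) ≤ σ - 1 (σ > 1), one has g_#(z) ≤ g₊(z) := min{ (z - z₁)/(z₁ - z₀)·(σ-1), ∫_0^1 g } for all z ≥ z₁. -/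
open Real Set

theorem crushdown_gsharp_upper_bound
    (σ : ℝ) (hσ : 1 < σ)
    (g : ℝ → ℝ)
    (hgnn : ∀ y ∈ Icc (0:ℝ) 1, 0 ≤ g y)
    (hconv : ConvexOn ℝ (Icc 0 1) g)
    (hcont : ContinuousOn g (Icc 0 1))
    (hg0 : g 0 = 0) (hg1 : g 1 ≤ σ - 1)
    (z₀ z₁ : ℝ) (hz : z₀ < z₁)
    (gsh : ℝ → ℝ)
    (hgsh : ∀ z : ℝ, z₁ ≤ z →
      gsh z = ∫ y in ((z₁ - z₀) / (z - z₀))..1, g y) :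
    ∀ z : ℝ, z₁ ≤ z →
      gsh z ≤ min ((z - z₁) / (z₁ - z₀) * (σ - 1)) (∫ y in (0:ℝ)..1, g y) := by
  intro z hz1
  rw [hgsh z hz1]
  set a : ℝ := (z₁ - z₀) / (z - z₀) with ha_def
  have hzz0 : (0:ℝ) < z - z₀ := by linarith
  have hz10 : (0:ℝ) < z₁ - z₀ := by linarith
  have ha0 : 0 < a := div_pos hz10 hzz0
  have ha1 : a ≤ 1 := by
    rw [ha_def, div_le_one hzz0]; linarith
  -- pointwise bound g y ≤ σ - 1 on [0,1]
  have hgle : ∀ y ∈ Icc (0:ℝ) 1, g y ≤ σ - 1 := by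
    intro y hy
    obtain ⟨hy0, hy1⟩ := hy
    have h := hconv.2 (show (0:ℝ) ∈ Icc (0:ℝ) 1 by constructor <;> norm_num)
      (show (1:ℝ) ∈ Icc (0:ℝ) 1 by constructor <;> norm_num)
      (show (0:ℝ) ≤ 1 - y by linarith) hy0 (by ring)
    simp only [smul_eq_mul, mul_zero, mul_one, zero_add] at h
    have hg1nn : 0 ≤ g 1 := hgnn 1 (by constructor <;> norm_num)
    calc g y ≤ (1 - y) * g 0 + y * g 1 := h
      _ = y * g 1 := by rw [hg0]; ring
      _ ≤ 1 * g 1 := by apply mul_le_mul_of_nonneg_right hy1 hg1nn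
      _ = g 1 := one_mul _
      _ ≤ σ - 1 := hg1
  have hIa1 : IntervalIntegrable g MeasureTheory.volume a 1 := by
    apply ContinuousOn.intervalIntegrable
    apply hcont.mono
    rw [uIcc_of_le ha1]
    exact Icc_subset_Icc (le_of_lt ha0) le_rfl
  have hI0a : IntervalIntegrable g MeasureTheory.volume 0 a := by
    apply ContinuousOn.intervalIntegrable
    apply hcont.mono
    rw [uIcc_of_le (le_of_lt ha0)]
    exact Icc_subset_Icc le_rfl ha1
  apply le_min
  · -- ∫_a^1 g ≤ (1-a)(σ-1) ≤ (z-z₁)/(z₁-z₀)(σ-1)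
    have h1 : (∫ y in a..1, g y) ≤ ∫ y in a..1, (σ - 1) := by
      apply intervalIntegral.integral_mono_on ha1 hIa1 intervalIntegrable_const
      intro y hy
      exact hgle y ⟨le_trans (le_of_lt ha0) hy.1, hy.2⟩
    have h2 : (∫ y in a..1, (σ - 1 : ℝ)) = (1 - a) * (σ - 1) := by
      simp [intervalIntegral.integral_const, smul_eq_mul]; ring
    have h3 : (1 - a) * (σ - 1) ≤ (z - z₁) / (z₁ - z₀) * (σ - 1) := by
      apply mul_le_mul_of_nonneg_right _ (by linarith)
      have : 1 - a = (z - z₁) / (z - z₀) := by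
        rw [ha_def]; field_simp; ring
      rw [this]
      apply div_le_div_of_nonneg_left (by linarith) hz10
      linarith
    linarith
  · -- ∫_a^1 g ≤ ∫_0^1 g
    have hsplit : (∫ y in (0:ℝ)..1, g y) = (∫ y in (0:ℝ)..a, g y) + ∫ y in a..1, g y :=
      (intervalIntegral.integral_add_adjacent_intervals hI0a hIa1).symm
    have hnn : 0 ≤ ∫ y in (0:ℝ)..a, g y := by
      apply intervalIntegral.integral_nonneg (le_of_lt ha0)
      intro y hy
      exact hgnn y ⟨hy.1, le_trans hy.2 ha1⟩
    linarith
end
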